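/- Let B be a real symmetric positive semidefinite d×d matrix, g, y ∈ ℝ^d, α₁ ∈ [0,1), β ∈ (0,1), η̂ > 0, and η̃ = η̂/β. Suppose x̂ ∈ ℝ^d satisfies ‖(I + η̂B)(x̂ − y) + η̂·g‖ ≤ α₁‖x̂ − y‖ and x̃ ∈ ℝ^d satisfies ‖(I + η̃B)(x̃ − y) + η̃·g‖ ≤ α₁‖x̃ − y‖. Then ‖x̃ − y‖ ≤ ((1+α₁)/(β(1−α₁)))·‖x̂ − y‖. -/

import Mathlib

noncomputable section

/-- The continuous linear map on Euclidean space induced by a square real matrix. -/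
def matCLM {d : ℕ} (M : Matrix (Fin d) (Fin d) ℝ) :
    EuclideanSpace ℝ (Fin d) →L[ℝ] EuclideanSpace ℝ (Fin d) :=
  Matrix.toEuclideanCLM (𝕜 := ℝ) M

lemma euclid_norm_le {d : ℕ} (x y : EuclideanSpace ℝ (Fin d))
    (h : ∀ i, |x i| ≤ |y i|) : ‖x‖ ≤ ‖y‖ := by
  rw [EuclideanSpace.norm_eq, EuclideanSpace.norm_eq]
  apply Real.sqrt_le_sqrt
  apply Finset.sum_le_sum
  intro i _
  rw [Real.norm_eq_abs, Real.norm_eq_abs]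
  exact pow_le_pow_left₀ (abs_nonneg _) (h i) 2

lemma matCLM_eq_lin {d : ℕ} (M : Matrix (Fin d) (Fin d) ℝ) (v : EuclideanSpace ℝ (Fin d)) :
    matCLM M v = Matrix.toEuclideanLin M v := by
  rw [matCLM, ← Matrix.coe_toEuclideanCLM_eq_toEuclideanLin]; rfl

lemma repr_matCLM {d : ℕ} {B : Matrix (Fin d) (Fin d) ℝ} (hB : B.PosSemidef)
    (η : ℝ) (w : EuclideanSpace ℝ (Fin d)) (i : Fin d) :
    hB.1.eigenvectorBasis.repr (matCLM (1 + η • B) w) i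
      = (1 + η * hB.1.eigenvalues i) * hB.1.eigenvectorBasis.repr w i := by
  have hM : (1 + η • B).IsHermitian := by
    apply Matrix.isHermitian_one.add
    unfold Matrix.IsHermitian
    rw [Matrix.conjTranspose_smul, hB.1.eq]
    simp
  have hSym := Matrix.isHermitian_iff_isSymmetric.mp hM
  set e := hB.1.eigenvectorBasis with he
  have heig : Matrix.toEuclideanLin (1 + η • B) (e i)
      = (1 + η * hB.1.eigenvalues i) • e i := by
    have h1 : Matrix.toEuclideanLin B (e i) = hB.1.eigenvalues i • e i := by
      apply (WithLp.equiv 2 (Fin d → ℝ)).injective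
      simp only [WithLp.equiv_apply, Matrix.ofLp_toEuclideanLin_apply]
      have := hB.1.mulVec_eigenvectorBasis i
      simpa using this
    rw [map_add, map_smul]
    simp only [LinearMap.add_apply, LinearMap.smul_apply, h1]
    have hone : Matrix.toEuclideanLin (1 : Matrix (Fin d) (Fin d) ℝ) (e i) = e i := by
      apply (WithLp.equiv 2 (Fin d → ℝ)).injective
      simp [Matrix.ofLp_toEuclideanLin_apply]
    rw [hone]
    module
  rw [matCLM_eq_lin, e.repr_apply_apply, e.repr_apply_apply,
    ← hSym (e i) w, heig, real_inner_smul_left]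

set_option maxHeartbeats 1000000 in
theorem stmt6 {d : ℕ}
    (B : Matrix (Fin d) (Fin d) ℝ) (hB : B.PosSemidef)
    (g y : EuclideanSpace ℝ (Fin d))
    (α₁ β ηhat ηt : ℝ) (hα₁0 : 0 ≤ α₁) (hα₁1 : α₁ < 1) (hβ0 : 0 < β) (hβ1 : β < 1)
    (hηhat : 0 < ηhat) (hηt : ηt = ηhat / β)
    (xhat xt : EuclideanSpace ℝ (Fin d))
    (h1 : ‖matCLM (1 + ηhat • B) (xhat - y) + ηhat • g‖ ≤ α₁ * ‖xhat - y‖)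
    (h2 : ‖matCLM (1 + ηt • B) (xt - y) + ηt • g‖ ≤ α₁ * ‖xt - y‖) :
    ‖xt - y‖ ≤ ((1 + α₁) / (β * (1 - α₁))) * ‖xhat - y‖ := by
  have hηt0 : 0 < ηt := by rw [hηt]; positivity
  have hle : ηhat ≤ ηt := by
    rw [hηt, le_div_iff₀ hβ0]; nlinarith
  set e := hB.1.eigenvectorBasis with he
  set lam := hB.1.eigenvalues with hlamdef
  have hlam : ∀ i, 0 ≤ lam i := hB.eigenvalues_nonneg
  set v := xt - y with hv
  set u := xhat - y with hu
  set W : EuclideanSpace ℝ (Fin d) := e.repr v with hW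
  set U : EuclideanSpace ℝ (Fin d) := e.repr u with hU
  set G : EuclideanSpace ℝ (Fin d) := e.repr g with hG
  have hdt : ∀ i, (0:ℝ) < 1 + ηt * lam i := fun i => by nlinarith [hlam i]
  have hdh : ∀ i, (0:ℝ) < 1 + ηhat * lam i := fun i => by nlinarith [hlam i]
  set Q : EuclideanSpace ℝ (Fin d) := WithLp.toLp 2 (fun i => -(ηt * G i) / (1 + ηt * lam i)) with hQ
  set P : EuclideanSpace ℝ (Fin d) := WithLp.toLp 2 (fun i => -(ηhat * G i) / (1 + ηhat * lam i)) with hP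
  set Rt : EuclideanSpace ℝ (Fin d) := e.repr (matCLM (1 + ηt • B) v + ηt • g) with hRt
  set Rh : EuclideanSpace ℝ (Fin d) := e.repr (matCLM (1 + ηhat • B) u + ηhat • g) with hRh
  have hRtc : ∀ i, Rt i = (1 + ηt * lam i) * W i + ηt * G i := by
    intro i
    have h0 : Rt i = (e.repr (matCLM (1 + ηt • B) v)) i + ηt * (e.repr g) i := by
      rw [hRt, map_add, map_smul]; rfl
    rw [h0, repr_matCLM hB]
  have hRhc : ∀ i, Rh i = (1 + ηhat * lam i) * U i + ηhat * G i := by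
    intro i
    have h0 : Rh i = (e.repr (matCLM (1 + ηhat • B) u)) i + ηhat * (e.repr g) i := by
      rw [hRh, map_add, map_smul]; rfl
    rw [h0, repr_matCLM hB]
  -- ‖W - Q‖ ≤ ‖Rt‖
  have hWQ : ‖W - Q‖ ≤ ‖Rt‖ := by
    apply euclid_norm_le
    intro i
    have : (W - Q) i = Rt i / (1 + ηt * lam i) := by
      have hne := (hdt i).ne'
      have hQi : Q i = -(ηt * G i) / (1 + ηt * lam i) := rfl
      simp only [PiLp.sub_apply, hRtc i, hQi]
      field_simp
      ring
    rw [this, abs_div, abs_of_pos (hdt i), div_le_iff₀ (hdt i)]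
    nlinarith [mul_nonneg (abs_nonneg (Rt i)) (mul_nonneg hηt0.le (hlam i))]
  have hPU : ‖P - U‖ ≤ ‖Rh‖ := by
    apply euclid_norm_le
    intro i
    have : (P - U) i = -(Rh i / (1 + ηhat * lam i)) := by
      have hne := (hdh i).ne'
      have hPi : P i = -(ηhat * G i) / (1 + ηhat * lam i) := rfl
      simp only [PiLp.sub_apply, hRhc i, hPi]
      field_simp
      ring
    rw [this, abs_neg, abs_div, abs_of_pos (hdh i), div_le_iff₀ (hdh i)]
    nlinarith [mul_nonneg (abs_nonneg (Rh i)) (mul_nonneg hηhat.le (hlam i))]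
  -- ‖Q‖ ≤ β⁻¹ ‖P‖
  have hQP : ‖Q‖ ≤ β⁻¹ * ‖P‖ := by
    have : ‖Q‖ ≤ ‖β⁻¹ • P‖ := by
      apply euclid_norm_le
      intro i
      have hsm : (β⁻¹ • P) i = β⁻¹ * P i := rfl
      have hQi : Q i = -(ηt * G i) / (1 + ηt * lam i) := rfl
      have hPi : P i = -(ηhat * G i) / (1 + ηhat * lam i) := rfl
      rw [hsm, hQi, hPi, abs_mul, abs_div, abs_div, abs_neg, abs_neg,
        abs_of_pos (hdt i), abs_of_pos (hdh i), abs_mul, abs_mul,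
        abs_of_pos hηt0, abs_of_pos hηhat, abs_of_pos (inv_pos.mpr hβ0)]
      rw [div_le_iff₀ (hdt i)]
      have hηteq : ηt = β⁻¹ * ηhat := by rw [hηt]; field_simp
      have hmono : (1 + ηhat * lam i) ≤ (1 + ηt * lam i) := by nlinarith [hlam i]
      rw [show β⁻¹ * (ηhat * |G i| / (1 + ηhat * lam i)) * (1 + ηt * lam i)
            = (β⁻¹ * (ηhat * |G i|) * (1 + ηt * lam i)) / (1 + ηhat * lam i) by ring,
        le_div_iff₀ (hdh i)]
      have hg := abs_nonneg (G i)
      calc ηt * |G i| * (1 + ηhat * lam i)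
          ≤ ηt * |G i| * (1 + ηt * lam i) :=
            mul_le_mul_of_nonneg_left hmono (mul_nonneg hηt0.le hg)
        _ = β⁻¹ * (ηhat * |G i|) * (1 + ηt * lam i) := by rw [hηteq]; ring
    calc ‖Q‖ ≤ ‖β⁻¹ • P‖ := this
      _ = β⁻¹ * ‖P‖ := by rw [norm_smul, Real.norm_eq_abs, abs_of_pos (inv_pos.mpr hβ0)]
  -- norms preserved
  have hnW : ‖W‖ = ‖v‖ := e.repr.norm_map v
  have hnU : ‖U‖ = ‖u‖ := e.repr.norm_map u
  have hnRt : ‖Rt‖ ≤ α₁ * ‖W‖ := by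
    rw [hRt, e.repr.norm_map, hnW]; exact h2
  have hnRh : ‖Rh‖ ≤ α₁ * ‖U‖ := by
    rw [hRh, e.repr.norm_map, hnU]; exact h1
  -- combine
  have t1 : ‖W‖ - ‖Q‖ ≤ ‖W - Q‖ := norm_sub_norm_le W Q
  have t2 : ‖P‖ - ‖U‖ ≤ ‖P - U‖ := norm_sub_norm_le P U
  have key : (1 - α₁) * ‖W‖ ≤ β⁻¹ * (1 + α₁) * ‖U‖ := by
    have hb : (0:ℝ) < β⁻¹ := inv_pos.mpr hβ0
    nlinarith [hWQ.trans hnRt, hPU.trans hnRh, hQP, t1, t2, norm_nonneg U, norm_nonneg P]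
  rw [← hnW, ← hnU]
  have h1α : (0:ℝ) < 1 - α₁ := by linarith
  rw [show ((1 + α₁) / (β * (1 - α₁))) * ‖U‖ = ((1 + α₁) * ‖U‖) / (β * (1 - α₁)) by ring,
    le_div_iff₀ (by positivity)]
  have : β * ((1-α₁) * ‖W‖) ≤ β * (β⁻¹ * (1 + α₁) * ‖U‖) := by
    apply mul_le_mul_of_nonneg_left key hβ0.le
  calc ‖W‖ * (β * (1 - α₁)) = β * ((1-α₁) * ‖W‖) := by ring
    _ ≤ β * (β⁻¹ * (1 + α₁) * ‖U‖) := this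
    _ = (1 + α₁) * ‖U‖ := by field_simp
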